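/- Let W be the lazy random walk on a finite simple connected regular graph G = (V,E), started from the uniform stationary distribution π. Fix s ≥ t_mix + 1 and a finite interval A ⊂ ℕ_0 with #A ≥ 2s+1. Then the expected number of (A,s)-locally non-erased indices satisfies (1 − 10s²/#V)·(#A − 2s)/sup_{ρ∈V} H^W_ρ(s) ≤ E_π[# NE^{W,s}(A)] ≤ #A, where H^W_ρ(s) = Σ_{i=0}^{s} Σ_{j=0}^{s} P_ρ(W(i+j) = ρ). -/

import Mathlib

open Finset

variable {V : Type*} [Fintype V] [DecidableEq V] [Nonempty V]

/-- One-step transition kernel of the lazy random walk on `G`: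
stay put with probability `1/2`, otherwise move to a uniformly chosen neighbour. -/
noncomputable def lazyStep (G : SimpleGraph V) [DecidableRel G.Adj] (x y : V) : ℝ :=
  if x = y then 1 / 2 else if G.Adj x y then 1 / (2 * (G.degree x : ℝ)) else 0

/-- `n`-step transition probabilities of the lazy random walk. -/
noncomputable def lazyProb (G : SimpleGraph V) [DecidableRel G.Adj] : ℕ → V → V → ℝ
  | 0, x, y => if x = y then 1 else 0
  | n + 1, x, y => ∑ z : V, lazyStep G x z * lazyProb G n z y

/-- The stationary (degree-biased) distribution `π(x) = deg(x)/(2#E)`. -/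
noncomputable def statDist (G : SimpleGraph V) [DecidableRel G.Adj] (x : V) : ℝ :=
  (G.degree x : ℝ) / (2 * (G.edgeFinset.card : ℝ))

/-- The uniform `(ℓ∞, 1/4)` mixing time. -/
noncomputable def tmix (G : SimpleGraph V) [DecidableRel G.Adj] : ℕ :=
  sInf {n : ℕ | ∀ x y : V, |lazyProb G n x y / statDist G y - 1| ≤ 1 / 4}

/-- Extension of a finite path to all of `ℕ` (constant after time `N`). -/
def extPath (N : ℕ) (γ : Fin (N + 1) → V) : ℕ → V :=
  fun n => γ ⟨min n N, Nat.lt_succ_of_le (min_le_right n N)⟩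

/-- Weight of a finite path under the lazy random walk kernel. -/
noncomputable def pathWeight (G : SimpleGraph V) [DecidableRel G.Adj]
    (N : ℕ) (γ : Fin (N + 1) → V) : ℝ :=
  ∏ i ∈ Finset.range N, lazyStep G (extPath N γ i) (extPath N γ (i + 1))

open Classical in
/-- Probability, for the lazy random walk started at `ρ`, of a path event
depending only on the first `N+1` coordinates. -/
noncomputable def walkProb (G : SimpleGraph V) [DecidableRel G.Adj]
    (ρ : V) (N : ℕ) (E : (ℕ → V) → Prop) : ℝ :=
  ∑ γ : Fin (N + 1) → V,
    if extPath N γ 0 = ρ ∧ E (extPath N γ) then pathWeight G N γ else 0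

open Classical in
/-- Expectation, for the lazy random walk started at `ρ`, of a path functional
depending only on the first `N+1` coordinates. -/
noncomputable def walkExp (G : SimpleGraph V) [DecidableRel G.Adj]
    (ρ : V) (N : ℕ) (f : (ℕ → V) → ℝ) : ℝ :=
  ∑ γ : Fin (N + 1) → V,
    if extPath N γ 0 = ρ then pathWeight G N γ * f (extPath N γ) else 0

open Classical in
/-- Probability of a path event for the lazy random walk started from `π`. -/
noncomputable def walkProbStat (G : SimpleGraph V) [DecidableRel G.Adj]
    (N : ℕ) (E : (ℕ → V) → Prop) : ℝ :=
  ∑ γ : Fin (N + 1) → V,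
    if E (extPath N γ) then statDist G (extPath N γ 0) * pathWeight G N γ else 0

/-- Expectation of a path functional for the lazy random walk started from `π`. -/
noncomputable def walkExpStat (G : SimpleGraph V) [DecidableRel G.Adj]
    (N : ℕ) (f : (ℕ → V) → ℝ) : ℝ :=
  ∑ γ : Fin (N + 1) → V,
    statDist G (extPath N γ 0) * pathWeight G N γ * f (extPath N γ)

open Classical in
/-- Probability of a joint event for two independent lazy random walks,
each started from the stationary distribution. -/
noncomputable def twoWalkProbStat (G : SimpleGraph V) [DecidableRel G.Adj]
    (N : ℕ) (E : (ℕ → V) → (ℕ → V) → Prop) : ℝ :=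
  ∑ γ₁ : Fin (N + 1) → V, ∑ γ₂ : Fin (N + 1) → V,
    if E (extPath N γ₁) (extPath N γ₂) then
      (statDist G (extPath N γ₁ 0) * pathWeight G N γ₁) *
      (statDist G (extPath N γ₂ 0) * pathWeight G N γ₂) else 0

open Classical in
/-- Probability of a joint event for two independent lazy random walks,
both started at the vertex `ρ`. -/
noncomputable def twoWalkProbFrom (G : SimpleGraph V) [DecidableRel G.Adj]
    (ρ : V) (N : ℕ) (E : (ℕ → V) → (ℕ → V) → Prop) : ℝ :=
  ∑ γ₁ : Fin (N + 1) → V, ∑ γ₂ : Fin (N + 1) → V,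
    if extPath N γ₁ 0 = ρ ∧ extPath N γ₂ 0 = ρ ∧ E (extPath N γ₁) (extPath N γ₂) then
      pathWeight G N γ₁ * pathWeight G N γ₂ else 0

/-- Range of a path over a finite set of times. -/
def walkRange (w : ℕ → V) (A : Finset ℕ) : Finset V := A.image w

/-- `q̄^G(s)`: averaged intersection probability of two independent lazy walks
started at the same (uniform) vertex. -/
noncomputable def qbar (G : SimpleGraph V) [DecidableRel G.Adj] (s : ℕ) : ℝ :=
  (1 / (Fintype.card V : ℝ)) * ∑ ρ : V,
    twoWalkProbFrom G ρ s (fun w₁ w₂ =>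
      (walkRange w₁ (Finset.Icc 0 s) ∩ walkRange w₂ (Finset.Icc 1 s)).Nonempty)

/-- `H^W_ρ(m) = Σ_{i=0}^m Σ_{j=0}^m P_ρ(W(i+j)=ρ)`. -/
noncomputable def HW (G : SimpleGraph V) [DecidableRel G.Adj] (ρ : V) (m : ℕ) : ℝ :=
  ∑ i ∈ Finset.range (m + 1), ∑ j ∈ Finset.range (m + 1), lazyProb G (i + j) ρ ρ

open Classical in
/-- Non-erased time indices of the chronological loop erasure of a path on the
interval starting at `a`: `NEseg w a k` is `NE^{w,[a,·]}(a+k)`. -/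
noncomputable def NEseg (w : ℕ → V) (a : ℕ) : ℕ → Finset ℕ
  | 0 => {a}
  | k + 1 =>
      (NEseg w a k).filter (fun m =>
        w (a + k + 1) ∉ ((NEseg w a k).filter (fun h => h ≤ m)).image w) ∪ {a + k + 1}

open Classical in
/-- `(A,s)`-locally non-erased time indices for `A = [a,b]`:
indices `m ∈ [a+s, b-s]` such that the range of the locally loop-erased segment
`NE^{w,[m-s,m]}(m)` does not meet the range of `w` on `[m+1,m+s]`. -/
noncomputable def NEloc (w : ℕ → V) (s a b : ℕ) : Finset ℕ :=
  (Finset.Icc (a + s) (b - s)).filter (fun m =>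
    walkRange w (NEseg w (m - s) s) ∩ walkRange w (Finset.Icc (m + 1) (m + s)) = ∅)


set_option linter.unusedSectionVars false
set_option maxHeartbeats 1600000

section Aux
variable (G : SimpleGraph V) [DecidableRel G.Adj]

lemma lazyStep_nonneg (x y : V) : 0 ≤ lazyStep G x y := by
  unfold lazyStep; split_ifs <;> positivity

lemma lazyStep_self (x : V) : lazyStep G x x = 1/2 := by simp [lazyStep]

lemma lazyStep_symm {d : ℕ} (hreg : G.IsRegularOfDegree d) (x y : V) :
    lazyStep G x y = lazyStep G y x := by
  unfold lazyStep
  rcases eq_or_ne x y with rfl | h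
  · simp
  · rw [if_neg h, if_neg (Ne.symm h)]
    by_cases hadj : G.Adj x y
    · rw [if_pos hadj, if_pos hadj.symm, hreg x, hreg y]
    · rw [if_neg hadj, if_neg (fun h' => hadj h'.symm)]

lemma sum_lazyStep (x : V) (hx : 0 < G.degree x) : ∑ y, lazyStep G x y = 1 := by
  have : ∀ y, lazyStep G x y
      = (if x = y then (1:ℝ)/2 else 0) + (if G.Adj x y then 1 / (2 * (G.degree x : ℝ)) else 0) := by
    intro y
    unfold lazyStep
    rcases eq_or_ne x y with rfl | h
    · simp
    · rw [if_neg h, if_neg h, zero_add]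
  rw [Finset.sum_congr rfl (fun y _ => this y), Finset.sum_add_distrib]
  have h1 : (∑ y, if x = y then (1:ℝ)/2 else 0) = 1/2 := by
    rw [Finset.sum_ite_eq]; simp
  have h2 : (∑ y, if G.Adj x y then 1 / (2 * (G.degree x : ℝ)) else 0)
      = (G.degree x : ℝ) * (1 / (2 * (G.degree x : ℝ))) := by
    rw [Finset.sum_ite, Finset.sum_const_zero, add_zero, Finset.sum_const]
    rw [← SimpleGraph.neighborFinset_eq_filter, SimpleGraph.card_neighborFinset_eq_degree,
      nsmul_eq_mul]
  rw [h1, h2]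
  have : (G.degree x : ℝ) ≠ 0 := by positivity
  field_simp
  ring

lemma lazyProb_nonneg (n : ℕ) (x y : V) : 0 ≤ lazyProb G n x y := by
  induction n generalizing x y with
  | zero => unfold lazyProb; split_ifs <;> norm_num
  | succ n ih =>
    unfold lazyProb
    exact Finset.sum_nonneg fun z _ => mul_nonneg (lazyStep_nonneg G x z) (ih z y)

lemma lazyProb_rowsum (hdeg : ∀ x : V, 0 < G.degree x) (n : ℕ) (x : V) :
    ∑ y, lazyProb G n x y = 1 := by
  induction n generalizing x with
  | zero => unfold lazyProb; rw [Finset.sum_ite_eq]; simp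
  | succ n ih =>
    unfold lazyProb
    rw [Finset.sum_comm]
    calc ∑ z, ∑ y, lazyStep G x z * lazyProb G n z y
        = ∑ z, lazyStep G x z * ∑ y, lazyProb G n z y := by
          simp [Finset.mul_sum]
      _ = 1 := by
          simp only [ih]
          simpa using sum_lazyStep G x (hdeg x)

lemma lazyProb_one (x y : V) : lazyProb G 1 x y = lazyStep G x y := by
  show (∑ z : V, lazyStep G x z * lazyProb G 0 z y) = _
  unfold lazyProb
  rw [Finset.sum_congr rfl (fun z _ => by rw [mul_ite, mul_one, mul_zero])]
  rw [Finset.sum_ite_eq']; simp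

lemma lazyProb_chapman (a b : ℕ) (x y : V) :
    lazyProb G (a + b) x y = ∑ z, lazyProb G a x z * lazyProb G b z y := by
  induction a generalizing x with
  | zero =>
    simp only [Nat.zero_add]
    unfold lazyProb
    rw [Finset.sum_congr rfl (fun z _ => by rw [ite_mul, one_mul, zero_mul])]
    rw [Finset.sum_ite_eq]; simp
  | succ a ih =>
    have : a + 1 + b = (a + b) + 1 := by omega
    rw [this]
    show (∑ z : V, lazyStep G x z * lazyProb G (a+b) z y) = _
    calc ∑ z : V, lazyStep G x z * lazyProb G (a+b) z y
        = ∑ z : V, lazyStep G x z * ∑ u, lazyProb G a z u * lazyProb G b u y := by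
          simp only [ih]
      _ = ∑ z : V, ∑ u, lazyStep G x z * (lazyProb G a z u * lazyProb G b u y) := by
          simp [Finset.mul_sum]
      _ = ∑ u, (∑ z : V, lazyStep G x z * lazyProb G a z u) * lazyProb G b u y := by
          rw [Finset.sum_comm]
          congr 1; ext u
          rw [Finset.sum_mul]
          congr 1; ext z; ring
      _ = _ := rfl

lemma lazyProb_symm {d : ℕ} (hreg : G.IsRegularOfDegree d) (n : ℕ) (x y : V) :
    lazyProb G n x y = lazyProb G n y x := by
  induction n generalizing x y with
  | zero => unfold lazyProb; simp [eq_comm]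
  | succ n ih =>
    show (∑ z : V, lazyStep G x z * lazyProb G n z y) = ∑ z : V, lazyStep G y z * lazyProb G n z x
    have h1 : lazyProb G (n + 1) y x = ∑ z, lazyProb G n y z * lazyProb G 1 z x :=
      lazyProb_chapman G n 1 y x
    show lazyProb G (n+1) x y = lazyProb G (n+1) y x
    rw [h1]
    show (∑ z : V, lazyStep G x z * lazyProb G n z y) = _
    apply Finset.sum_congr rfl
    intro z _
    rw [lazyProb_one, lazyStep_symm G hreg x z, ih z y, lazyStep_symm G hreg z x]
    ring

lemma lazyProb_colsum {d : ℕ} (hreg : G.IsRegularOfDegree d) (hdeg : ∀ x : V, 0 < G.degree x)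
    (n : ℕ) (y : V) : ∑ x, lazyProb G n x y = 1 := by
  rw [Finset.sum_congr rfl (fun x _ => lazyProb_symm G hreg n x y)]
  exact lazyProb_rowsum G hdeg n y

lemma sum_lazyStep_col {d : ℕ} (hreg : G.IsRegularOfDegree d) (hdeg : ∀ x : V, 0 < G.degree x)
    (y : V) : ∑ x, lazyStep G x y = 1 := by
  rw [Finset.sum_congr rfl (fun x _ => lazyStep_symm G hreg x y)]
  exact sum_lazyStep G y (hdeg y)

end Aux


section Mix
variable (G : SimpleGraph V) [DecidableRel G.Adj]

lemma degree_pos (hconn : G.Connected) (hcard : 2 ≤ Fintype.card V) (x : V) :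
    0 < G.degree x := by
  obtain ⟨y, hy⟩ := Fintype.exists_ne_of_one_lt_card hcard x
  obtain ⟨w⟩ := hconn.preconnected x y
  rw [G.degree_pos_iff_exists_adj]
  cases w with
  | nil => exact absurd rfl (Ne.symm hy)
  | cons h p => exact ⟨_, h⟩

lemma statDist_eq {d : ℕ} (hreg : G.IsRegularOfDegree d) (hd : 0 < d) (x : V) :
    statDist G x = 1 / (Fintype.card V : ℝ) := by
  have h2 : ∑ v : V, G.degree v = 2 * G.edgeFinset.card :=
    SimpleGraph.sum_degrees_eq_twice_card_edges G
  have h3 : ∑ v : V, G.degree v = Fintype.card V * d := by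
    rw [Finset.sum_congr rfl (fun v _ => hreg v), Finset.sum_const, card_univ, smul_eq_mul]
  have h4 : 2 * (G.edgeFinset.card : ℝ) = (Fintype.card V : ℝ) * d := by
    have := h3 ▸ h2
    exact_mod_cast congrArg (Nat.cast : ℕ → ℝ) this.symm
  have hn : (0:ℝ) < Fintype.card V := by
    have := Fintype.card_pos (α := V); positivity
  unfold statDist
  rw [hreg x, h4]
  field_simp

lemma lazyStep_pos_adj (x y : V) (h : G.Adj x y) : 0 < lazyStep G x y := by
  have hd : 0 < G.degree x := G.degree_pos_iff_exists_adj x |>.2 ⟨y, h⟩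
  unfold lazyStep
  rw [if_neg (G.ne_of_adj h), if_pos h]
  have : (0:ℝ) < G.degree x := by exact_mod_cast hd
  positivity

lemma lazyProb_pos_of_walk {x y : V} (w : G.Walk x y) : 0 < lazyProb G w.length x y := by
  induction w with
  | nil => simp [lazyProb]
  | @cons a b c h p ih =>
    show 0 < lazyProb G (p.length + 1) a c
    have hterm : 0 < lazyStep G a b * lazyProb G p.length b c :=
      mul_pos (lazyStep_pos_adj G a b h) ih
    calc (0:ℝ) < lazyStep G a b * lazyProb G p.length b c := hterm
      _ ≤ ∑ z : V, lazyStep G a z * lazyProb G p.length z c :=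
        Finset.single_le_sum (f := fun z => lazyStep G a z * lazyProb G p.length z c)
          (fun z _ => mul_nonneg (lazyStep_nonneg G a z) (lazyProb_nonneg G _ z c))
          (mem_univ b)
      _ = lazyProb G (p.length + 1) a c := rfl

lemma lazyProb_pos_succ {t : ℕ} {x y : V} (h : 0 < lazyProb G t x y) :
    0 < lazyProb G (t+1) x y := by
  have hterm : 0 < lazyStep G x x * lazyProb G t x y := by
    rw [lazyStep_self]; linarith
  calc (0:ℝ) < lazyStep G x x * lazyProb G t x y := hterm
    _ ≤ ∑ z : V, lazyStep G x z * lazyProb G t z y :=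
      Finset.single_le_sum (f := fun z => lazyStep G x z * lazyProb G t z y)
        (fun z _ => mul_nonneg (lazyStep_nonneg G x z) (lazyProb_nonneg G _ z y))
        (mem_univ x)
    _ = lazyProb G (t+1) x y := rfl

lemma lazyProb_pos_of_le {t t' : ℕ} {x y : V} (h : 0 < lazyProb G t x y) (ht : t ≤ t') :
    0 < lazyProb G t' x y := by
  induction t' , ht using Nat.le_induction with
  | base => exact h
  | succ n hn ih => exact lazyProb_pos_succ G ih

lemma lazyProb_pos_all (hconn : G.Connected) : ∀ x y : V,
    0 < lazyProb G (Fintype.card V) x y := by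
  intro x y
  obtain ⟨w⟩ := hconn.preconnected x y
  have hp := w.toPath.2.length_lt
  exact lazyProb_pos_of_le G (lazyProb_pos_of_walk G w.toPath.1) (by omega)

lemma contraction {d : ℕ} (hreg : G.IsRegularOfDegree d) (hdeg : ∀ x : V, 0 < G.degree x)
    {r : ℕ} {ε : ℝ} (hε : 0 < ε) (hle : ∀ x y : V, ε ≤ lazyProb G r x y) :
    ∀ (k : ℕ) (x y : V),
      |lazyProb G (k * r) x y - 1 / (Fintype.card V : ℝ)|
        ≤ (1 - (Fintype.card V : ℝ) * ε) ^ k := by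
  set n : ℝ := (Fintype.card V : ℝ) with hn
  have hn0 : 0 < n := by
    have := Fintype.card_pos (α := V); rw [hn]; positivity
  have hnε : n * ε ≤ 1 := by
    have h1 : ∑ y : V, ε ≤ ∑ y, lazyProb G r (Classical.arbitrary V) y :=
      Finset.sum_le_sum fun y _ => hle _ y
    rw [lazyProb_rowsum G hdeg, Finset.sum_const, card_univ, nsmul_eq_mul] at h1
    exact h1
  have hfac : 0 ≤ 1 - n * ε := by linarith
  intro k
  induction k with
  | zero =>
    intro x y
    simp only [Nat.zero_mul, pow_zero]
    show |lazyProb G 0 x y - 1/n| ≤ 1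
    unfold lazyProb
    have h1n : 0 < 1/n := by positivity
    have h1n' : 1/n ≤ 1 := by
      rw [div_le_one hn0]
      have h1 : (1:ℕ) ≤ Fintype.card V := Fintype.card_pos
      rw [hn]; exact_mod_cast h1
    split_ifs
    · rw [abs_of_nonneg (by linarith)]; linarith
    · rw [abs_of_nonpos (by linarith), neg_sub]; linarith
  | succ k ih =>
    intro x y
    have hsplit : (k+1) * r = r + k * r := by ring
    have hexp : lazyProb G ((k+1) * r) x y - 1/n
        = ∑ z, (lazyProb G r x z - ε) * (lazyProb G (k * r) z y - 1/n) := by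
      rw [hsplit, lazyProb_chapman]
      have expand : ∀ z : V, (lazyProb G r x z - ε) * (lazyProb G (k * r) z y - 1/n)
          = lazyProb G r x z * lazyProb G (k*r) z y
            - (1/n) * lazyProb G r x z - ε * lazyProb G (k*r) z y + ε * (1/n) := by
        intro z; ring
      rw [Finset.sum_congr rfl fun z _ => expand z]
      rw [Finset.sum_add_distrib, Finset.sum_sub_distrib, Finset.sum_sub_distrib,
        ← Finset.mul_sum, ← Finset.mul_sum, Finset.sum_const, card_univ, nsmul_eq_mul,
        lazyProb_rowsum G hdeg, lazyProb_colsum G hreg hdeg]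
      rw [← hn]
      field_simp
      ring
    rw [hexp]
    calc |∑ z, (lazyProb G r x z - ε) * (lazyProb G (k * r) z y - 1/n)|
        ≤ ∑ z, |(lazyProb G r x z - ε) * (lazyProb G (k * r) z y - 1/n)| :=
          Finset.abs_sum_le_sum_abs _ _
      _ ≤ ∑ z, (lazyProb G r x z - ε) * (1 - n * ε) ^ k := by
          apply Finset.sum_le_sum
          intro z _
          rw [abs_mul, abs_of_nonneg (by linarith [hle x z])]
          exact mul_le_mul_of_nonneg_left (ih z y) (by linarith [hle x z])
      _ = (1 - n * ε) ^ (k+1) := by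
          rw [← Finset.sum_mul, Finset.sum_sub_distrib, lazyProb_rowsum G hdeg,
            Finset.sum_const, card_univ, nsmul_eq_mul, ← hn, pow_succ]
          ring

lemma mix_iff {d : ℕ} (hreg : G.IsRegularOfDegree d) (hd : 0 < d) (t : ℕ) :
    (∀ x y : V, |lazyProb G t x y / statDist G y - 1| ≤ 1 / 4)
      ↔ ∀ x y : V, |lazyProb G t x y - 1 / (Fintype.card V : ℝ)|
          ≤ 1 / (4 * (Fintype.card V : ℝ)) := by
  have hn0 : (0:ℝ) < (Fintype.card V : ℝ) := by
    have := Fintype.card_pos (α := V); positivity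
  have key : ∀ x y : V, lazyProb G t x y / statDist G y - 1
      = (Fintype.card V : ℝ) * (lazyProb G t x y - 1 / (Fintype.card V : ℝ)) := by
    intro x y
    rw [statDist_eq G hreg hd]
    field_simp
  constructor
  · intro h x y
    have := h x y
    rw [key, abs_mul, abs_of_nonneg hn0.le] at this
    rw [show (1:ℝ) / (4 * (Fintype.card V : ℝ)) = (1/4) / (Fintype.card V:ℝ) by ring]
    rw [le_div_iff₀ hn0]
    linarith
  · intro h x y
    rw [key, abs_mul, abs_of_nonneg hn0.le]
    have := h x y
    calc (Fintype.card V : ℝ) * |lazyProb G t x y - 1 / (Fintype.card V : ℝ)|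
        ≤ (Fintype.card V : ℝ) * (1 / (4 * (Fintype.card V : ℝ))) :=
          mul_le_mul_of_nonneg_left this hn0.le
      _ = 1/4 := by field_simp
      _ ≤ 1/4 := le_refl _

lemma mix_succ {d : ℕ} (hreg : G.IsRegularOfDegree d) (hdeg : ∀ x : V, 0 < G.degree x)
    (t : ℕ)
    (h : ∀ x y : V, |lazyProb G t x y - 1 / (Fintype.card V : ℝ)|
      ≤ 1 / (4 * (Fintype.card V : ℝ))) :
    ∀ x y : V, |lazyProb G (t+1) x y - 1 / (Fintype.card V : ℝ)|
      ≤ 1 / (4 * (Fintype.card V : ℝ)) := by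
  intro x y
  have hexp : lazyProb G (t+1) x y - 1 / (Fintype.card V : ℝ)
      = ∑ z, lazyStep G x z * (lazyProb G t z y - 1 / (Fintype.card V : ℝ)) := by
    show (∑ z : V, lazyStep G x z * lazyProb G t z y) - 1 / (Fintype.card V : ℝ) = _
    rw [Finset.sum_congr rfl fun z _ => mul_sub (lazyStep G x z) _ _,
      Finset.sum_sub_distrib, ← Finset.sum_mul, sum_lazyStep G x (hdeg x), one_mul]
  rw [hexp]
  calc |∑ z, lazyStep G x z * (lazyProb G t z y - 1 / (Fintype.card V : ℝ))|
      ≤ ∑ z, |lazyStep G x z * (lazyProb G t z y - 1 / (Fintype.card V : ℝ))| :=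
        Finset.abs_sum_le_sum_abs _ _
    _ ≤ ∑ z, lazyStep G x z * (1 / (4 * (Fintype.card V : ℝ))) := by
        apply Finset.sum_le_sum
        intro z _
        rw [abs_mul, abs_of_nonneg (lazyStep_nonneg G x z)]
        exact mul_le_mul_of_nonneg_left (h z y) (lazyStep_nonneg G x z)
    _ = 1 / (4 * (Fintype.card V : ℝ)) := by
        rw [← Finset.sum_mul, sum_lazyStep G x (hdeg x), one_mul]

lemma mix_bound {d : ℕ} (hconn : G.Connected) (hcard : 2 ≤ Fintype.card V)
    (hreg : G.IsRegularOfDegree d) :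
    ∀ t : ℕ, tmix G ≤ t → ∀ x y : V,
      lazyProb G t x y ≤ 5 / (4 * (Fintype.card V : ℝ)) := by
  have hdeg : ∀ x : V, 0 < G.degree x := degree_pos G hconn hcard
  have hd : 0 < d := by rw [← hreg (Classical.arbitrary V)]; exact hdeg _
  have hn0 : (0:ℝ) < (Fintype.card V : ℝ) := by
    have := Fintype.card_pos (α := V); positivity
  -- the mixing set is nonempty
  set S := {n : ℕ | ∀ x y : V, |lazyProb G n x y / statDist G y - 1| ≤ 1 / 4} with hS
  have hSne : S.Nonempty := by
    set r := Fintype.card V with hr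
    have hrpos := lazyProb_pos_all G hconn
    set ε := ((univ : Finset (V × V)).inf' (by simp [Finset.univ_nonempty]) 
      (fun p => lazyProb G r p.1 p.2)) with hε
    have hεpos : 0 < ε := by
      rw [hε, Finset.lt_inf'_iff]
      intro p _
      exact hrpos p.1 p.2
    have hεle : ∀ x y : V, ε ≤ lazyProb G r x y := by
      intro x y
      exact Finset.inf'_le _ (Finset.mem_univ (x, y))
    have hcontr := contraction G hreg hdeg hεpos hεle
    have hnε1 : (Fintype.card V : ℝ) * ε ≤ 1 := by
      have h1 : ∑ y : V, ε ≤ ∑ y, lazyProb G r (Classical.arbitrary V) y :=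
        Finset.sum_le_sum fun y _ => hεle _ y
      rw [lazyProb_rowsum G hdeg, Finset.sum_const, card_univ, nsmul_eq_mul] at h1
      exact h1
    obtain ⟨k, hk⟩ := exists_pow_lt_of_lt_one
      (x := 1 / (4 * (Fintype.card V : ℝ))) (y := 1 - (Fintype.card V : ℝ) * ε)
      (by positivity) (by nlinarith)
    refine ⟨k * r, ?_⟩
    rw [hS, Set.mem_setOf_eq, mix_iff G hreg hd]
    intro x y
    exact le_trans (hcontr k x y) hk.le
  have hmem : tmix G ∈ S := Nat.sInf_mem hSne
  intro t ht x y
  have hind : ∀ u : ℕ, tmix G ≤ u → u ∈ S := by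
    intro u hu
    induction u, hu using Nat.le_induction with
    | base => exact hmem
    | succ m hm ih =>
      rw [hS, Set.mem_setOf_eq, mix_iff G hreg hd] at ih ⊢
      exact mix_succ G hreg hdeg m ih
  have hts := hind t ht
  rw [hS, Set.mem_setOf_eq, mix_iff G hreg hd] at hts
  have := abs_le.1 (hts x y)
  have h5 : (1:ℝ) / (Fintype.card V : ℝ) + 1 / (4 * (Fintype.card V : ℝ))
      = 5 / (4 * (Fintype.card V : ℝ)) := by field_simp; ring
  linarith [this.2]

end Mix

section PathTools
variable (G : SimpleGraph V) [DecidableRel G.Adj]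

def Sh (c : ℕ) (w : ℕ → V) : ℕ → V := fun t => w (t + c)

def snocFun (n : ℕ) (u : ℕ → V) (v : V) : ℕ → V := fun t => if t ≤ n then u t else v

noncomputable def freeSum (L : ℕ) (f : (ℕ → V) → ℝ) : ℝ :=
  ∑ γ : Fin (L + 1) → V, pathWeight G L γ * f (extPath L γ)

lemma extPath_le {N : ℕ} (γ : Fin (N+1) → V) {t : ℕ} (h : t ≤ N) :
    extPath N γ t = γ ⟨t, Nat.lt_succ_of_le h⟩ := by
  unfold extPath
  congr 1
  exact Fin.ext (by simp [min_eq_left h])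

lemma extPath_ge {N : ℕ} (γ : Fin (N+1) → V) {t : ℕ} (h : N ≤ t) :
    extPath N γ t = γ ⟨N, Nat.lt_succ_self N⟩ := by
  unfold extPath
  congr 1
  exact Fin.ext (by simp [min_eq_right h])

lemma extPath_zero {N : ℕ} (γ : Fin (N+1) → V) :
    extPath N γ 0 = γ ⟨0, Nat.succ_pos N⟩ := extPath_le γ (Nat.zero_le N)

lemma ext_snoc {n : ℕ} (γ : Fin (n+1) → V) (v : V) :
    extPath (n+1) (Fin.snoc γ v) = snocFun n (extPath n γ) v := by
  funext t
  by_cases h : t ≤ n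
  · rw [extPath_le _ (by omega), snocFun, if_pos h, extPath_le _ h]
    have : (⟨t, by omega⟩ : Fin (n+2)) = Fin.castSucc ⟨t, by omega⟩ := rfl
    rw [this, Fin.snoc_castSucc]
  · rw [extPath_ge _ (by omega), snocFun, if_neg h]
    have : (⟨n+1, by omega⟩ : Fin (n+2)) = Fin.last (n+1) := rfl
    rw [this, Fin.snoc_last]

lemma ext_cons_sh {n : ℕ} (x : V) (γ : Fin (n+1) → V) :
    Sh 1 (extPath (n+1) (Fin.cons x γ)) = extPath n γ := by
  funext t
  show extPath (n+1) (Fin.cons x γ) (t+1) = extPath n γ t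
  by_cases h : t ≤ n
  · rw [extPath_le _ (by omega : t+1 ≤ n+1), extPath_le _ h]
    have : (⟨t+1, by omega⟩ : Fin (n+2)) = Fin.succ ⟨t, by omega⟩ := rfl
    rw [this, Fin.cons_succ]
  · rw [extPath_ge _ (by omega : n+1 ≤ t+1), extPath_ge _ (by omega : n ≤ t)]
    have : (⟨n+1, by omega⟩ : Fin (n+2)) = Fin.succ ⟨n, by omega⟩ := rfl
    rw [this, Fin.cons_succ]

lemma ext_cons_zero {n : ℕ} (x : V) (γ : Fin (n+1) → V) :
    extPath (n+1) (Fin.cons x γ) 0 = x := by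
  rw [extPath_zero]
  have h0 : (⟨0, Nat.succ_pos (n+1)⟩ : Fin (n+2)) = 0 := rfl
  rw [h0, Fin.cons_zero]

lemma weight_snoc {n : ℕ} (γ : Fin (n+1) → V) (v : V) :
    pathWeight G (n+1) (Fin.snoc γ v)
      = pathWeight G n γ * lazyStep G (extPath n γ n) v := by
  unfold pathWeight
  rw [Finset.prod_range_succ]
  simp only [ext_snoc, snocFun]
  congr 1
  · apply Finset.prod_congr rfl
    intro i hi
    rw [Finset.mem_range] at hi
    rw [if_pos (by omega : i ≤ n), if_pos (by omega : i + 1 ≤ n)]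
  · rw [if_pos (le_refl n), if_neg (by omega)]

lemma weight_cons {n : ℕ} (x : V) (γ : Fin (n+1) → V) :
    pathWeight G (n+1) (Fin.cons x γ)
      = lazyStep G x (extPath n γ 0) * pathWeight G n γ := by
  have hsh : ∀ t : ℕ, extPath (n+1) (Fin.cons x γ) (t+1) = extPath n γ t :=
    fun t => congrFun (ext_cons_sh x γ) t
  unfold pathWeight
  rw [Finset.prod_range_succ']
  rw [mul_comm]
  congr 1
  · apply Finset.prod_congr rfl
    intro i hi
    rw [hsh i, hsh (i+1)]

lemma sum_snoc_eq {n : ℕ} (f : (Fin (n+2) → V) → ℝ) :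
    ∑ γ : Fin (n+2) → V, f γ = ∑ γ' : Fin (n+1) → V, ∑ v : V, f (Fin.snoc γ' v) := by
  rw [← Equiv.sum_comp (Fin.snocEquiv (fun _ => V)) f, Fintype.sum_prod_type]
  rw [Finset.sum_comm]
  rfl

lemma sum_cons_eq {n : ℕ} (f : (Fin (n+2) → V) → ℝ) :
    ∑ γ : Fin (n+2) → V, f γ = ∑ v : V, ∑ γ' : Fin (n+1) → V, f (Fin.cons v γ') := by
  rw [← Equiv.sum_comp (Fin.consEquiv (fun _ => V)) f, Fintype.sum_prod_type]
  rfl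

end PathTools

section WalkTools
variable (G : SimpleGraph V) [DecidableRel G.Adj]

def DetUpTo (M : ℕ) (f : (ℕ → V) → ℝ) : Prop :=
  ∀ u u' : ℕ → V, (∀ t, t ≤ M → u t = u' t) → f u = f u'

lemma pathWeight_nonneg (N : ℕ) (γ : Fin (N+1) → V) : 0 ≤ pathWeight G N γ :=
  Finset.prod_nonneg fun i _ => lazyStep_nonneg G _ _

lemma walkExp_zero (ρ : V) (f : (ℕ → V) → ℝ) : walkExp G ρ 0 f = f (fun _ => ρ) := by
  unfold walkExp
  rw [← Equiv.sum_comp (Equiv.funUnique (Fin 1) V).symm]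
  have hext : ∀ v : V, extPath 0 ((Equiv.funUnique (Fin 1) V).symm v) = fun _ => v := by
    intro v; funext t; rfl
  have hw : ∀ v : V, pathWeight G 0 ((Equiv.funUnique (Fin 1) V).symm v) = 1 := by
    intro v; unfold pathWeight; simp
  calc (∑ v : V, if extPath 0 ((Equiv.funUnique (Fin 1) V).symm v) 0 = ρ then
          pathWeight G 0 ((Equiv.funUnique (Fin 1) V).symm v)
            * f (extPath 0 ((Equiv.funUnique (Fin 1) V).symm v)) else 0)
      = ∑ v : V, (if v = ρ then f (fun _ => v) else 0) := by
        apply Finset.sum_congr rfl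
        intro v _
        rw [hext v, hw v, one_mul]
    _ = f (fun _ => ρ) := by rw [Finset.sum_ite_eq' univ ρ (fun v => f (fun _ => v))]; simp

lemma walkExp_nonneg (ρ : V) (N : ℕ) (f : (ℕ → V) → ℝ) (hf : ∀ w, 0 ≤ f w) :
    0 ≤ walkExp G ρ N f := by
  apply Finset.sum_nonneg
  intro γ _
  split_ifs
  · exact mul_nonneg (pathWeight_nonneg G N γ) (hf _)
  · exact le_refl 0

lemma walkExp_congr (ρ : V) (N : ℕ) {f g : (ℕ → V) → ℝ}
    (h : ∀ w, w 0 = ρ → f w = g w) : walkExp G ρ N f = walkExp G ρ N g := by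
  unfold walkExp
  apply Finset.sum_congr rfl
  intro γ _
  split_ifs with hc
  · rw [h _ hc]
  · rfl

lemma walkExp_smul (ρ : V) (N : ℕ) (c : ℝ) (f : (ℕ → V) → ℝ) :
    walkExp G ρ N (fun w => c * f w) = c * walkExp G ρ N f := by
  unfold walkExp
  rw [Finset.mul_sum]
  apply Finset.sum_congr rfl
  intro γ _
  split_ifs
  · ring
  · ring

lemma walkExp_snoc (ρ : V) (n : ℕ) (f : (ℕ → V) → ℝ) :
    walkExp G ρ (n+1) f
      = walkExp G ρ n (fun u => ∑ v : V, lazyStep G (u n) v * f (snocFun n u v)) := by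
  unfold walkExp
  rw [sum_snoc_eq]
  apply Finset.sum_congr rfl
  intro γ' _
  have h0 : ∀ v : V, extPath (n+1) (Fin.snoc γ' v) 0 = extPath n γ' 0 := by
    intro v
    rw [ext_snoc]
    show snocFun n (extPath n γ') v 0 = _
    rw [snocFun, if_pos (Nat.zero_le n)]
  by_cases hc : extPath n γ' 0 = ρ
  · rw [if_pos hc, Finset.mul_sum]
    apply Finset.sum_congr rfl
    intro v _
    rw [if_pos (by rw [h0 v]; exact hc), weight_snoc, ext_snoc]
    ring
  · rw [if_neg hc]
    apply Finset.sum_eq_zero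
    intro v _
    rw [if_neg (by rw [h0 v]; exact hc)]

end WalkTools

section WalkTools2
variable (G : SimpleGraph V) [DecidableRel G.Adj]

lemma walkExp_const (hK1 : ∀ x : V, ∑ y, lazyStep G x y = 1)
    (ρ : V) (N : ℕ) (c : ℝ) : walkExp G ρ N (fun _ => c) = c := by
  induction N generalizing ρ with
  | zero => rw [walkExp_zero]
  | succ n ih =>
    rw [walkExp_snoc]
    have : ∀ u : ℕ → V, (∑ v : V, lazyStep G (u n) v * c) = c := by
      intro u
      rw [← Finset.sum_mul, hK1, one_mul]
    calc walkExp G ρ n (fun u => ∑ v : V, lazyStep G (u n) v * c)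
        = walkExp G ρ n (fun _ => c) := by
          apply walkExp_congr
          intro w _
          exact this w
      _ = c := ih ρ

lemma walkExp_det (hK1 : ∀ x : V, ∑ y, lazyStep G x y = 1)
    {M : ℕ} {f : (ℕ → V) → ℝ} (hdet : DetUpTo M f) (ρ : V) :
    ∀ n, M ≤ n → walkExp G ρ n f = walkExp G ρ M f := by
  intro n hn
  induction n, hn using Nat.le_induction with
  | base => rfl
  | succ m hm ih =>
    rw [walkExp_snoc]
    rw [← ih]
    apply walkExp_congr
    intro w _
    have : ∀ v : V, f (snocFun m w v) = f w := by
      intro v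
      apply hdet
      intro t ht
      rw [snocFun, if_pos (by omega)]
    calc (∑ v : V, lazyStep G (w m) v * f (snocFun m w v))
        = ∑ v : V, lazyStep G (w m) v * f w := by
          apply Finset.sum_congr rfl
          intro v _; rw [this v]
      _ = f w := by rw [← Finset.sum_mul, hK1, one_mul]

lemma freeSum_eq_sum_walkExp (L : ℕ) (f : (ℕ → V) → ℝ) :
    freeSum G L f = ∑ ρ : V, walkExp G ρ L f := by
  unfold freeSum walkExp
  rw [Finset.sum_comm]
  apply Finset.sum_congr rfl
  intro γ _
  rw [Finset.sum_ite_eq univ (extPath L γ 0) (fun _ => pathWeight G L γ * f (extPath L γ))]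
  simp

lemma freeSum_congr {L : ℕ} {f g : (ℕ → V) → ℝ}
    (h : ∀ γ : Fin (L+1) → V, f (extPath L γ) = g (extPath L γ)) :
    freeSum G L f = freeSum G L g := by
  unfold freeSum
  exact Finset.sum_congr rfl fun γ _ => by rw [h γ]

lemma freeSum_nonneg (L : ℕ) (f : (ℕ → V) → ℝ) (hf : ∀ w, 0 ≤ f w) :
    0 ≤ freeSum G L f :=
  Finset.sum_nonneg fun γ _ => mul_nonneg (pathWeight_nonneg G L γ) (hf _)

lemma freeSum_mono (L : ℕ) {f g : (ℕ → V) → ℝ} (h : ∀ w, f w ≤ g w) :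
    freeSum G L f ≤ freeSum G L g :=
  Finset.sum_le_sum fun γ _ =>
    mul_le_mul_of_nonneg_left (h _) (pathWeight_nonneg G L γ)

lemma freeSum_add (L : ℕ) (f g : (ℕ → V) → ℝ) :
    freeSum G L (fun w => f w + g w) = freeSum G L f + freeSum G L g := by
  unfold freeSum
  rw [← Finset.sum_add_distrib]
  exact Finset.sum_congr rfl fun γ _ => by ring

lemma freeSum_sum {ι : Type*} (L : ℕ) (S : Finset ι) (f : ι → (ℕ → V) → ℝ) :
    freeSum G L (fun w => ∑ i ∈ S, f i w) = ∑ i ∈ S, freeSum G L (f i) := by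
  unfold freeSum
  rw [Finset.sum_comm]
  exact Finset.sum_congr rfl fun γ _ => by rw [Finset.mul_sum]

lemma freeSum_const (hK1 : ∀ x : V, ∑ y, lazyStep G x y = 1) (L : ℕ) (c : ℝ) :
    freeSum G L (fun _ => c) = (Fintype.card V : ℝ) * c := by
  rw [freeSum_eq_sum_walkExp]
  rw [Finset.sum_congr rfl fun ρ _ => walkExp_const G hK1 ρ L c]
  rw [Finset.sum_const, card_univ, nsmul_eq_mul]

lemma freeSum_det (hK1 : ∀ x : V, ∑ y, lazyStep G x y = 1)
    {M : ℕ} {f : (ℕ → V) → ℝ} (hdet : DetUpTo M f) :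
    ∀ n, M ≤ n → freeSum G n f = freeSum G M f := by
  intro n hn
  rw [freeSum_eq_sum_walkExp, freeSum_eq_sum_walkExp]
  exact Finset.sum_congr rfl fun ρ _ => walkExp_det G hK1 hdet ρ n hn

lemma freeSum_snoc (L : ℕ) (f : (ℕ → V) → ℝ) :
    freeSum G (L+1) f
      = freeSum G L (fun u => ∑ v : V, lazyStep G (u L) v * f (snocFun L u v)) := by
  unfold freeSum
  rw [sum_snoc_eq]
  apply Finset.sum_congr rfl
  intro γ' _
  rw [Finset.mul_sum]
  apply Finset.sum_congr rfl
  intro v _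
  rw [weight_snoc, ext_snoc]
  ring

lemma freeSum_sh (hcol : ∀ y : V, ∑ x, lazyStep G x y = 1) (L : ℕ) (f : (ℕ → V) → ℝ) :
    freeSum G (L+1) (fun w => f (Sh 1 w)) = freeSum G L f := by
  unfold freeSum
  rw [sum_cons_eq]
  rw [Finset.sum_comm]
  apply Finset.sum_congr rfl
  intro γ' _
  have hx : ∀ x : V, Sh 1 (extPath (L+1) (Fin.cons x γ')) = extPath L γ' :=
    fun x => ext_cons_sh x γ'
  calc (∑ x : V, pathWeight G (L+1) (Fin.cons x γ') * f (Sh 1 (extPath (L+1) (Fin.cons x γ'))))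
      = ∑ x : V, lazyStep G x (extPath L γ' 0) * (pathWeight G L γ' * f (extPath L γ')) := by
        apply Finset.sum_congr rfl
        intro x _
        rw [hx x, weight_cons]
        ring
    _ = pathWeight G L γ' * f (extPath L γ') := by
        rw [← Finset.sum_mul, hcol, one_mul]

lemma freeSum_sh_iter (hcol : ∀ y : V, ∑ x, lazyStep G x y = 1) (c L : ℕ)
    (f : (ℕ → V) → ℝ) :
    freeSum G (c + L) (fun w => f (Sh c w)) = freeSum G L f := by
  induction c with
  | zero => rw [Nat.zero_add]; rfl
  | succ c ih =>
    have h1 : c + 1 + L = (c + L) + 1 := by omega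
    rw [h1]
    have h2 : (fun w => f (Sh (c+1) w)) = (fun w => (fun w' => f (Sh c w')) (Sh 1 w)) := rfl
    rw [h2, freeSum_sh G hcol (c + L) (fun w' => f (Sh c w'))]
    exact ih

end WalkTools2

section WalkTools3
variable (G : SimpleGraph V) [DecidableRel G.Adj]

lemma fs3 (b : ℕ) : ∀ (M : ℕ) (g : (ℕ → V) → (ℕ → V) → ℝ),
    (∀ (u u' x : ℕ → V), (∀ t, t ≤ M → u t = u' t) → g u x = g u' x) →
    freeSum G (M + b) (fun w => g w (Sh M w))
      = freeSum G M (fun u => walkExp G (u M) b (g u)) := by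
  induction b with
  | zero =>
    intro M g hdet
    apply freeSum_congr
    intro γ
    rw [walkExp_zero]
    congr 1
    funext t
    show extPath M γ (t + M) = extPath M γ M
    rw [extPath_ge γ (by omega), extPath_ge γ (le_refl M)]
  | succ b ih =>
    intro M g hdet
    rw [show M + (b+1) = (M + b) + 1 from rfl, freeSum_snoc]
    set g' : (ℕ → V) → (ℕ → V) → ℝ :=
      fun u x => ∑ v : V, lazyStep G (x b) v * g u (snocFun b x v) with hg'
    have key : ∀ u : ℕ → V,
        (∑ v : V, lazyStep G (u (M + b)) v
          * (fun w => g w (Sh M w)) (snocFun (M + b) u v)) = g' u (Sh M u) := by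
      intro u
      rw [hg']
      apply Finset.sum_congr rfl
      intro v _
      have hKk : Sh M u b = u (M + b) := by
        show u (b + M) = u (M + b)
        rw [Nat.add_comm]
      rw [hKk]
      congr 1
      show g (snocFun (M + b) u v) (Sh M (snocFun (M + b) u v)) = g u (snocFun b (Sh M u) v)
      have h1 : g (snocFun (M + b) u v) (Sh M (snocFun (M + b) u v))
          = g u (Sh M (snocFun (M + b) u v)) := by
        apply hdet
        intro t ht
        rw [snocFun, if_pos (by omega)]
      rw [h1]
      congr 1
      funext t
      show snocFun (M + b) u v (t + M) = snocFun b (Sh M u) v t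
      unfold snocFun Sh
      by_cases hlt : t ≤ b
      · rw [if_pos (by omega), if_pos hlt]
      · rw [if_neg (by omega), if_neg hlt]
    have hstep : freeSum G (M + b)
        (fun u => ∑ v : V, lazyStep G (u (M + b)) v
          * (fun w => g w (Sh M w)) (snocFun (M + b) u v))
        = freeSum G (M + b) (fun w => g' w (Sh M w)) := by
      apply freeSum_congr
      intro γ
      exact key _
    rw [hstep]
    have hdet' : ∀ (u u' x : ℕ → V), (∀ t, t ≤ M → u t = u' t) → g' u x = g' u' x := by
      intro u u' x h
      rw [hg']
      exact Finset.sum_congr rfl fun v _ => by rw [hdet u u' _ h]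
    rw [ih M g' hdet']
    apply freeSum_congr
    intro γ
    rw [walkExp_snoc]

lemma walkExp_endpoint (k : ℕ) : ∀ (ρ : V) (h : V → ℝ),
    walkExp G ρ k (fun x => h (x k)) = ∑ z, lazyProb G k ρ z * h z := by
  induction k with
  | zero =>
    intro ρ h
    rw [walkExp_zero]
    show h ρ = ∑ z, lazyProb G 0 ρ z * h z
    unfold lazyProb
    rw [Finset.sum_congr rfl (fun z _ => by rw [ite_mul, one_mul, zero_mul]),
      Finset.sum_ite_eq univ ρ h]
    simp
  | succ k ih =>
    intro ρ h
    rw [walkExp_snoc]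
    have hc : ∀ u : ℕ → V,
        (∑ v : V, lazyStep G (u k) v * (fun x => h (x (k+1))) (snocFun k u v))
          = (fun y => ∑ v : V, lazyStep G y v * h v) (u k) := by
      intro u
      apply Finset.sum_congr rfl
      intro v _
      congr 1
      show h (snocFun k u v (k+1)) = h v
      rw [snocFun, if_neg (by omega)]
    have : walkExp G ρ k (fun u => ∑ v : V, lazyStep G (u k) v
          * (fun x => h (x (k+1))) (snocFun k u v))
        = walkExp G ρ k (fun u => (fun y => ∑ v : V, lazyStep G y v * h v) (u k)) := by
      apply walkExp_congr
      intro w _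
      exact hc w
    rw [this, ih ρ (fun y => ∑ v : V, lazyStep G y v * h v)]
    calc ∑ z, lazyProb G k ρ z * ∑ v, lazyStep G z v * h v
        = ∑ z, ∑ v, lazyProb G k ρ z * (lazyStep G z v * h v) :=
          Finset.sum_congr rfl fun z _ => by rw [Finset.mul_sum]
      _ = ∑ v, ∑ z, lazyProb G k ρ z * (lazyStep G z v * h v) := Finset.sum_comm
      _ = ∑ v, lazyProb G (k+1) ρ v * h v := by
          apply Finset.sum_congr rfl
          intro v _
          rw [lazyProb_chapman G k 1 ρ v, Finset.sum_mul]
          exact Finset.sum_congr rfl fun z _ => by rw [lazyProb_one]; ring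

def revEquiv (L : ℕ) : (Fin (L+1) → V) ≃ (Fin (L+1) → V) where
  toFun := fun γ => γ ∘ Fin.rev
  invFun := fun γ => γ ∘ Fin.rev
  left_inv := fun γ => by funext i; simp [Fin.rev_rev]
  right_inv := fun γ => by funext i; simp [Fin.rev_rev]

lemma freeSum_rev (hKs : ∀ x y : V, lazyStep G x y = lazyStep G y x) (L : ℕ)
    (f : (ℕ → V) → ℝ) :
    freeSum G L f = freeSum G L (fun w => f (fun t => w (L - t))) := by
  unfold freeSum
  rw [← Equiv.sum_comp (revEquiv (V := V) L) (fun γ => pathWeight G L γ * f (extPath L γ))]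
  apply Finset.sum_congr rfl
  intro γ _
  have hee : revEquiv (V := V) L γ = γ ∘ Fin.rev := rfl
  have hrev_ext : extPath L (γ ∘ Fin.rev) = fun t => extPath L γ (L - t) := by
    funext t
    show γ (Fin.rev ⟨min t L, _⟩) = γ ⟨min (L - t) L, _⟩
    congr 1
    apply Fin.ext
    rw [Fin.val_rev]
    simp only []
    omega
  rw [hee, hrev_ext]
  congr 1
  unfold pathWeight
  calc (∏ i ∈ Finset.range L,
        lazyStep G (extPath L (γ ∘ Fin.rev) i) (extPath L (γ ∘ Fin.rev) (i+1)))
      = ∏ i ∈ Finset.range L,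
          (fun j => lazyStep G (extPath L γ (j+1)) (extPath L γ j)) (L - 1 - i) := by
        apply Finset.prod_congr rfl
        intro i hi
        rw [Finset.mem_range] at hi
        rw [congrFun hrev_ext i, congrFun hrev_ext (i+1)]
        have h1 : L - i = (L - 1 - i) + 1 := by omega
        have h2 : L - (i+1) = L - 1 - i := by omega
        rw [h1, h2]
    _ = ∏ i ∈ Finset.range L, lazyStep G (extPath L γ (i+1)) (extPath L γ i) := by
        exact Finset.prod_range_reflect
          (fun j => lazyStep G (extPath L γ (j+1)) (extPath L γ j)) L
    _ = ∏ i ∈ Finset.range L, lazyStep G (extPath L γ i) (extPath L γ (i+1)) :=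
        Finset.prod_congr rfl fun i _ => hKs _ _

end WalkTools3




section Events
variable (G : SimpleGraph V) [DecidableRel G.Adj]

open Classical in
noncomputable def avInd (s : ℕ) (u : ℕ → V) : (ℕ → V) → ℝ :=
  fun x => if walkRange u (Finset.Icc 0 s) ∩ walkRange x (Finset.Icc 1 s) = ∅ then 1 else 0

noncomputable def Fx (s : ℕ) (x : V) : ℝ :=
  walkExp G x s (fun u => walkExp G x s (avInd s u))

def Bp (s k : ℕ) (w : ℕ → V) : Prop :=
  w s = w (s+k) ∧
    walkRange w (Finset.Icc 0 s) ∩ walkRange w (Finset.Icc (s+k+1) (s+k+s)) = ∅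

open Classical in
noncomputable def indB (s k : ℕ) : (ℕ → V) → ℝ := fun w => if Bp s k w then 1 else 0

open Classical in
noncomputable def meetInd (k : ℕ) : (ℕ → V) → ℝ := fun w => if w 0 = w k then 1 else 0

lemma walkRange_sh (c a b : ℕ) (w : ℕ → V) :
    walkRange (Sh c w) (Finset.Icc a b) = walkRange w (Finset.Icc (a+c) (b+c)) := by
  unfold walkRange Sh
  rw [← Finset.image_add_right_Icc]
  rw [Finset.image_image]
  rfl

lemma walkRange_congr {A : Finset ℕ} {w w' : ℕ → V} (h : ∀ t ∈ A, w t = w' t) :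
    walkRange w A = walkRange w' A := Finset.image_congr fun t ht => h t ht

lemma walkRange_reflect (s : ℕ) (u : ℕ → V) :
    walkRange (fun t => u (s - t)) (Finset.Icc 0 s) = walkRange u (Finset.Icc 0 s) := by
  unfold walkRange
  ext v
  simp only [Finset.mem_image, Finset.mem_Icc]
  constructor
  · rintro ⟨t, ⟨-, ht⟩, rfl⟩
    exact ⟨s - t, ⟨Nat.zero_le _, by omega⟩, rfl⟩
  · rintro ⟨t, ⟨-, ht⟩, rfl⟩
    exact ⟨s - t, ⟨Nat.zero_le _, by omega⟩, by congr 1; omega⟩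

lemma indB_det (s k : ℕ) : DetUpTo (2*s+k) (indB (V := V) s k) := by
  intro u u' h
  unfold indB
  have h1 : u s = u' s := h s (by omega)
  have h2 : u (s+k) = u' (s+k) := h (s+k) (by omega)
  have h3 : walkRange u (Finset.Icc 0 s) = walkRange u' (Finset.Icc 0 s) :=
    walkRange_congr fun t ht => h t (by rw [Finset.mem_Icc] at ht; omega)
  have h4 : walkRange u (Finset.Icc (s+k+1) (s+k+s)) = walkRange u' (Finset.Icc (s+k+1) (s+k+s)) :=
    walkRange_congr fun t ht => h t (by rw [Finset.mem_Icc] at ht; omega)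
  unfold Bp
  rw [h1, h2, h3, h4]

lemma meetInd_det (k : ℕ) : DetUpTo k (meetInd (V := V) k) := by
  intro u u' h
  unfold meetInd
  rw [h 0 (by omega), h k (le_refl k)]

lemma psi_eq {d : ℕ} (hreg : G.IsRegularOfDegree d) (hdeg : ∀ x : V, 0 < G.degree x)
    (s k : ℕ) :
    freeSum G (2*s+k) (indB s k) = ∑ x : V, lazyProb G k x x * Fx G s x := by
  classical
  have hK1 : ∀ x : V, ∑ y, lazyStep G x y = 1 := fun x => sum_lazyStep G x (hdeg x)
  have hKs : ∀ x y : V, lazyStep G x y = lazyStep G y x := lazyStep_symm G hreg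
  -- step 1
  set g₁ : (ℕ → V) → (ℕ → V) → ℝ := fun u x =>
    if (u s = u (s+k)) ∧ (walkRange u (Finset.Icc 0 s) ∩ walkRange x (Finset.Icc 1 s) = ∅)
    then 1 else 0 with hg₁
  have hstep1 : ∀ w : ℕ → V, indB s k w = g₁ w (Sh (s+k) w) := by
    intro w
    have hr : walkRange (Sh (s+k) w) (Finset.Icc 1 s)
        = walkRange w (Finset.Icc (s+k+1) (s+k+s)) := by
      rw [walkRange_sh, show 1+(s+k) = s+k+1 by omega, show s+(s+k) = s+k+s by omega]
    show (if Bp s k w then (1:ℝ) else 0) = _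
    rw [hg₁]
    exact if_congr (by unfold Bp; rw [hr]) rfl rfl
  have hdet₁ : ∀ (u u' x : ℕ → V), (∀ t, t ≤ s+k → u t = u' t) → g₁ u x = g₁ u' x := by
    intro u u' x h
    rw [hg₁]
    have h1 : u s = u' s := h s (by omega)
    have h2 : u (s+k) = u' (s+k) := h (s+k) (le_refl _)
    have h3 : walkRange u (Finset.Icc 0 s) = walkRange u' (Finset.Icc 0 s) :=
      walkRange_congr fun t ht => h t (by rw [Finset.mem_Icc] at ht; omega)
    simp only [h1, h2, h3]
  have e1 : freeSum G (2*s+k) (indB s k)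
      = freeSum G ((s+k)+s) (fun w => g₁ w (Sh (s+k) w)) := by
    rw [show 2*s+k = (s+k)+s by omega]
    exact freeSum_congr G fun γ => hstep1 _
  rw [e1, fs3 G s (s+k) g₁ hdet₁]
  -- step 2
  have hsplit : ∀ (u : ℕ → V),
      walkExp G (u (s+k)) s (g₁ u)
        = (if u s = u (s+k) then (1:ℝ) else 0) * walkExp G (u (s+k)) s (avInd s u) := by
    intro u
    rw [← walkExp_smul]
    apply walkExp_congr
    intro x _
    rw [hg₁]
    unfold avInd
    by_cases h1 : u s = u (s+k) <;>
      by_cases h2 : walkRange u (Finset.Icc 0 s) ∩ walkRange x (Finset.Icc 1 s) = ∅ <;>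
      simp [h1, h2]
  set g₂ : (ℕ → V) → (ℕ → V) → ℝ := fun u x =>
    (if u s = x k then (1:ℝ) else 0) * walkExp G (x k) s (avInd s u) with hg₂
  have e2 : freeSum G (s+k) (fun u => walkExp G (u (s+k)) s (g₁ u))
      = freeSum G (s+k) (fun u => g₂ u (Sh s u)) := by
    apply freeSum_congr
    intro γ
    rw [hsplit]
    rw [hg₂]
    have hk : Sh s (extPath (s+k) γ) k = extPath (s+k) γ (s+k) := by
      show extPath (s+k) γ (k+s) = extPath (s+k) γ (s+k)
      congr 1; omega
    simp only [hk]
  rw [e2]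
  have hdet₂ : ∀ (u u' x : ℕ → V), (∀ t, t ≤ s → u t = u' t) → g₂ u x = g₂ u' x := by
    intro u u' x h
    rw [hg₂]
    have h1 : u s = u' s := h s (le_refl _)
    have h3 : avInd s u = avInd s u' := by
      funext x'
      unfold avInd
      rw [walkRange_congr (w := u) (w' := u')
        fun t ht => h t (by rw [Finset.mem_Icc] at ht; omega)]
    simp only [h1, h3]
  rw [fs3 G k s g₂ hdet₂]
  -- step 3 : endpoint collapse
  have e3 : freeSum G s (fun u => walkExp G (u s) k (g₂ u))
      = freeSum G s (fun u => lazyProb G k (u s) (u s) * walkExp G (u s) s (avInd s u)) := by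
    apply freeSum_congr
    intro γ
    set u := extPath s γ
    have : walkExp G (u s) k (g₂ u)
        = walkExp G (u s) k (fun x =>
            (fun z => (if u s = z then (1:ℝ) else 0) * walkExp G z s (avInd s u)) (x k)) := rfl
    rw [this, walkExp_endpoint G k (u s)
      (fun z => (if u s = z then (1:ℝ) else 0) * walkExp G z s (avInd s u))]
    calc (∑ z : V, lazyProb G k (u s) z
            * ((if u s = z then (1:ℝ) else 0) * walkExp G z s (avInd s u)))
        = ∑ z : V, if u s = z then lazyProb G k (u s) z * walkExp G z s (avInd s u) else 0 := by
          apply Finset.sum_congr rfl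
          intro z _
          by_cases hz : u s = z <;> simp [hz]
      _ = lazyProb G k (u s) (u s) * walkExp G (u s) s (avInd s u) := by
          rw [Finset.sum_ite_eq univ (u s)
            (fun z => lazyProb G k (u s) z * walkExp G z s (avInd s u))]
          simp
  rw [e3]
  -- step 4 : reversal
  rw [freeSum_rev G hKs s]
  have e4 : ∀ γ : Fin (s+1) → V,
      (fun w => lazyProb G k (w s) (w s) * walkExp G (w s) s (avInd s w))
          (fun t => extPath s γ (s - t))
        = (fun u => lazyProb G k (u 0) (u 0) * walkExp G (u 0) s (avInd s u))
            (extPath s γ) := by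
    intro γ
    show lazyProb G k (extPath s γ (s-s)) (extPath s γ (s-s))
        * walkExp G (extPath s γ (s-s)) s (avInd s (fun t => extPath s γ (s - t)))
      = lazyProb G k (extPath s γ 0) (extPath s γ 0)
        * walkExp G (extPath s γ 0) s (avInd s (extPath s γ))
    have h0 : s - s = 0 := by omega
    have hav : avInd s (fun t => extPath s γ (s - t)) = avInd s (extPath s γ) := by
      funext x
      unfold avInd
      rw [walkRange_reflect]
    rw [h0, hav]
  have e5 : freeSum G s
        (fun w => (fun w' => lazyProb G k (w' s) (w' s) * walkExp G (w' s) s (avInd s w'))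
          (fun t => w (s - t)))
      = freeSum G s (fun u => lazyProb G k (u 0) (u 0) * walkExp G (u 0) s (avInd s u)) :=
    freeSum_congr G e4
  rw [e5]
  -- step 5 : group by starting point
  rw [freeSum_eq_sum_walkExp]
  apply Finset.sum_congr rfl
  intro ρ _
  have e6 : walkExp G ρ s (fun u => lazyProb G k (u 0) (u 0) * walkExp G (u 0) s (avInd s u))
      = walkExp G ρ s (fun u => lazyProb G k ρ ρ * walkExp G ρ s (avInd s u)) := by
    apply walkExp_congr
    intro w hw
    rw [hw]
  rw [e6, walkExp_smul]
  rfl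



section Cover
variable (G : SimpleGraph V) [DecidableRel G.Adj]

def BadP (s : ℕ) (w : ℕ → V) : Prop :=
  ∃ i, i ≤ 2*s ∧ ∃ j, j ≤ 2*s ∧ s+1 ≤ i+j ∧ w (3*s-i) = w (3*s+j)

open Classical in
noncomputable def badInd (s : ℕ) : (ℕ → V) → ℝ := fun w => if BadP s w then 1 else 0

lemma cover_aux (s : ℕ) (w : ℕ → V) : ∀ (dfuel i j : ℕ), i ≤ s → j ≤ s → s - j ≤ dfuel →
    w (3*s-i) = w (3*s+j) →
    (∃ i, i ≤ s ∧ ∃ j, j ≤ s ∧ Bp s (i+j) (Sh (2*s-i) w)) ∨ BadP s w := by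
  intro dfuel
  induction dfuel with
  | zero =>
    intro i j hi hj hd hmeet
    by_cases hB : Bp s (i+j) (Sh (2*s-i) w)
    · exact Or.inl ⟨i, hi, j, hj, hB⟩
    · right
      have hj' : j = s := by omega
      -- extract an intersection
      have h1 : (Sh (2*s-i) w) s = w (3*s-i) := by
        show w (s + (2*s-i)) = w (3*s-i); congr 1; omega
      have h2 : (Sh (2*s-i) w) (s + (i+j)) = w (3*s+j) := by
        show w (s + (i+j) + (2*s-i)) = w (3*s+j); congr 1; omega
      have hfirst : (Sh (2*s-i) w) s = (Sh (2*s-i) w) (s + (i+j)) := by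
        rw [h1, h2]; exact hmeet
      have hsecond : ¬ (walkRange (Sh (2*s-i) w) (Finset.Icc 0 s)
          ∩ walkRange (Sh (2*s-i) w) (Finset.Icc (s+(i+j)+1) (s+(i+j)+s)) = ∅) := by
        intro hc; exact hB ⟨hfirst, hc⟩
      obtain ⟨v, hv⟩ := Finset.nonempty_iff_ne_empty.2 hsecond
      rw [Finset.mem_inter] at hv
      rw [walkRange_sh, walkRange_sh] at hv
      obtain ⟨hv1, hv2⟩ := hv
      obtain ⟨t₁, ht₁, hw1⟩ := Finset.mem_image.1 hv1
      obtain ⟨t₂, ht₂, hw2⟩ := Finset.mem_image.1 hv2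
      rw [Finset.mem_Icc] at ht₁ ht₂
      refine ⟨3*s - t₁, by omega, t₂ - 3*s, by omega, by omega, ?_⟩
      have e1 : 3*s - (3*s - t₁) = t₁ := by omega
      have e2 : 3*s + (t₂ - 3*s) = t₂ := by omega
      rw [e1, e2, hw1, hw2]
  | succ dfuel ih =>
    intro i j hi hj hd hmeet
    by_cases hB : Bp s (i+j) (Sh (2*s-i) w)
    · exact Or.inl ⟨i, hi, j, hj, hB⟩
    · have h1 : (Sh (2*s-i) w) s = w (3*s-i) := by
        show w (s + (2*s-i)) = w (3*s-i); congr 1; omega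
      have h2 : (Sh (2*s-i) w) (s + (i+j)) = w (3*s+j) := by
        show w (s + (i+j) + (2*s-i)) = w (3*s+j); congr 1; omega
      have hfirst : (Sh (2*s-i) w) s = (Sh (2*s-i) w) (s + (i+j)) := by
        rw [h1, h2]; exact hmeet
      have hsecond : ¬ (walkRange (Sh (2*s-i) w) (Finset.Icc 0 s)
          ∩ walkRange (Sh (2*s-i) w) (Finset.Icc (s+(i+j)+1) (s+(i+j)+s)) = ∅) := by
        intro hc; exact hB ⟨hfirst, hc⟩
      obtain ⟨v, hv⟩ := Finset.nonempty_iff_ne_empty.2 hsecond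
      rw [Finset.mem_inter] at hv
      rw [walkRange_sh, walkRange_sh] at hv
      obtain ⟨hv1, hv2⟩ := hv
      obtain ⟨t₁, ht₁, hw1⟩ := Finset.mem_image.1 hv1
      obtain ⟨t₂, ht₂, hw2⟩ := Finset.mem_image.1 hv2
      rw [Finset.mem_Icc] at ht₁ ht₂
      have hmeet' : w (3*s - (3*s - t₁)) = w (3*s + (t₂ - 3*s)) := by
        have e1 : 3*s - (3*s - t₁) = t₁ := by omega
        have e2 : 3*s + (t₂ - 3*s) = t₂ := by omega
        rw [e1, e2, hw1, hw2]
      by_cases hbox : 3*s - t₁ ≤ s ∧ t₂ - 3*s ≤ s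
      · exact ih (3*s - t₁) (t₂ - 3*s) hbox.1 hbox.2 (by omega) hmeet'
      · exact Or.inr ⟨3*s - t₁, by omega, t₂ - 3*s, by omega, by omega, hmeet'⟩

lemma cover (s : ℕ) (w : ℕ → V) :
    (∃ i, i ≤ s ∧ ∃ j, j ≤ s ∧ Bp s (i+j) (Sh (2*s-i) w)) ∨ BadP s w := by
  have h0 : w (3*s - 0) = w (3*s + 0) := by norm_num
  exact cover_aux s w s 0 0 (Nat.zero_le s) (Nat.zero_le s) (by omega) h0

end Cover

section Master
variable (G : SimpleGraph V) [DecidableRel G.Adj]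

lemma walkExpStat_eq {d : ℕ} (hreg : G.IsRegularOfDegree d) (hd : 0 < d) (N : ℕ)
    (f : (ℕ → V) → ℝ) :
    walkExpStat G N f = (Fintype.card V : ℝ)⁻¹ * freeSum G N f := by
  unfold walkExpStat freeSum
  rw [Finset.mul_sum]
  apply Finset.sum_congr rfl
  intro γ _
  rw [statDist_eq G hreg hd]
  ring

lemma freeSum_meet (k : ℕ) : freeSum G k (meetInd k) = ∑ ρ : V, lazyProb G k ρ ρ := by
  rw [freeSum_eq_sum_walkExp]
  apply Finset.sum_congr rfl
  intro ρ _
  have h1 : walkExp G ρ k (meetInd k)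
      = walkExp G ρ k (fun x => (fun z => if ρ = z then (1:ℝ) else 0) (x k)) := by
    apply walkExp_congr
    intro w hw
    unfold meetInd
    exact if_congr (by rw [hw]) rfl rfl
  rw [h1, walkExp_endpoint G k ρ (fun z => if ρ = z then (1:ℝ) else 0)]
  calc (∑ z : V, lazyProb G k ρ z * (if ρ = z then (1:ℝ) else 0))
      = ∑ z : V, if ρ = z then lazyProb G k ρ z else 0 := by
        apply Finset.sum_congr rfl
        intro z _
        by_cases hz : ρ = z <;> simp [hz]
    _ = lazyProb G k ρ ρ := by rw [Finset.sum_ite_eq univ ρ (fun z => lazyProb G k ρ z)]; simp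

lemma Fx_nonneg (s : ℕ) (x : V) : 0 ≤ Fx G s x := by
  apply walkExp_nonneg
  intro w
  apply walkExp_nonneg
  intro w'
  unfold avInd
  split_ifs <;> norm_num

lemma indB_nonneg (s k : ℕ) (w : ℕ → V) : 0 ≤ indB (V := V) s k w := by
  unfold indB; split_ifs <;> norm_num

lemma meetInd_nonneg (k : ℕ) (w : ℕ → V) : 0 ≤ meetInd (V := V) k w := by
  unfold meetInd; split_ifs <;> norm_num

lemma core_lower {d : ℕ} (hconn : G.Connected) (hcard : 2 ≤ Fintype.card V)
    (hreg : G.IsRegularOfDegree d) {s : ℕ} (hs : tmix G + 1 ≤ s) :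
    1 - 10*(s:ℝ)^2/(Fintype.card V : ℝ)
      ≤ (⨆ ρ : V, HW G ρ s) * walkExpStat G (2*s) (indB s 0) := by
  classical
  have hdeg := degree_pos G hconn hcard
  have hd : 0 < d := by rw [← hreg (Classical.arbitrary V)]; exact hdeg _
  have hK1 : ∀ x : V, ∑ y, lazyStep G x y = 1 := fun x => sum_lazyStep G x (hdeg x)
  have hKs : ∀ x y : V, lazyStep G x y = lazyStep G y x := lazyStep_symm G hreg
  have hcol : ∀ y : V, ∑ x, lazyStep G x y = 1 := by
    intro y
    rw [Finset.sum_congr rfl fun x _ => hKs x y]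
    exact hK1 y
  set n : ℝ := (Fintype.card V : ℝ) with hn
  have hn0 : 0 < n := by
    have := Fintype.card_pos (α := V); rw [hn]; positivity
  have hs1 : 1 ≤ s := by omega
  set box : Finset (ℕ × ℕ) := (Finset.range (s+1)) ×ˢ (Finset.range (s+1)) with hbox
  set badF : Finset (ℕ × ℕ) :=
    ((Finset.range (2*s+1)) ×ˢ (Finset.range (2*s+1))).filter (fun p => s+1 ≤ p.1+p.2)
    with hbadF
  -- pointwise covering bound
  have hpoint : ∀ w : ℕ → V,
      (1:ℝ) ≤ (∑ p ∈ box, indB s (p.1+p.2) (Sh (2*s-p.1) w)) + badInd s w := by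
    intro w
    have hb0 : (0:ℝ) ≤ badInd s w := by unfold badInd; split_ifs <;> norm_num
    have hsum0 : (0:ℝ) ≤ ∑ p ∈ box, indB s (p.1+p.2) (Sh (2*s-p.1) w) :=
      Finset.sum_nonneg fun p _ => indB_nonneg _ _ _
    rcases cover s w with ⟨i, hi, j, hj, hB⟩ | hbad
    · have hmem : (i, j) ∈ box := by
        rw [hbox, Finset.mem_product, Finset.mem_range, Finset.mem_range]
        omega
      have hterm : indB s (i+j) (Sh (2*s-i) w) = 1 := by
        unfold indB; rw [if_pos hB]
      have hle1 := Finset.single_le_sum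
        (f := fun p : ℕ × ℕ => indB s (p.1+p.2) (Sh (2*s-p.1) w))
        (fun p _ => indB_nonneg _ _ _) hmem
      have hge1 : (1:ℝ) ≤ ∑ p ∈ box, indB s (p.1+p.2) (Sh (2*s-p.1) w) := by
        rw [← hterm]; exact hle1
      linarith
    · have : badInd s w = 1 := by unfold badInd; rw [if_pos hbad]
      linarith
  have hbadpoint : ∀ w : ℕ → V,
      badInd s w ≤ ∑ p ∈ badF, meetInd (p.1+p.2) (Sh (3*s-p.1) w) := by
    intro w
    have hsum0 : (0:ℝ) ≤ ∑ p ∈ badF, meetInd (p.1+p.2) (Sh (3*s-p.1) w) :=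
      Finset.sum_nonneg fun p _ => meetInd_nonneg _ _
    by_cases hbad : BadP s w
    · obtain ⟨i, hi, j, hj, hsij, hmeet⟩ := hbad
      have hmem : (i, j) ∈ badF := by
        rw [hbadF, Finset.mem_filter, Finset.mem_product, Finset.mem_range, Finset.mem_range]
        exact ⟨⟨by omega, by omega⟩, hsij⟩
      have hterm : meetInd (i+j) (Sh (3*s-i) w) = 1 := by
        unfold meetInd
        rw [if_pos]
        show w (0 + (3*s-i)) = w (i+j+(3*s-i))
        rw [show 0 + (3*s-i) = 3*s-i by omega, show i+j+(3*s-i) = 3*s+j by omega]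
        exact hmeet
      have hle1 := Finset.single_le_sum
        (f := fun p : ℕ × ℕ => meetInd (p.1+p.2) (Sh (3*s-p.1) w))
        (fun p _ => meetInd_nonneg _ _) hmem
      have hge1 : (1:ℝ) ≤ ∑ p ∈ badF, meetInd (p.1+p.2) (Sh (3*s-p.1) w) := by
        rw [← hterm]; exact hle1
      have hb1 : badInd s w ≤ 1 := by unfold badInd; split_ifs <;> norm_num
      linarith
    · have : badInd s w = 0 := by unfold badInd; rw [if_neg hbad]
      rw [this]; exact hsum0
  -- identities for the expectations
  have hE1 : walkExpStat G (6*s) (fun _ => (1:ℝ)) = 1 := by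
    rw [walkExpStat_eq G hreg hd, freeSum_const G hK1, ← hn]
    field_simp
  have hEA : ∀ p : ℕ × ℕ, p ∈ box →
      walkExpStat G (6*s) (fun w => indB s (p.1+p.2) (Sh (2*s-p.1) w))
        = n⁻¹ * ∑ x : V, lazyProb G (p.1+p.2) x x * Fx G s x := by
    rintro ⟨i, j⟩ hp
    rw [hbox, Finset.mem_product, Finset.mem_range, Finset.mem_range] at hp
    rw [walkExpStat_eq G hreg hd, ← hn]
    congr 1
    rw [show 6*s = (2*s-i) + (4*s+i) from by omega]
    rw [freeSum_sh_iter G hcol (2*s-i) (4*s+i) (indB s (i+j))]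
    rw [freeSum_det G hK1 (indB_det s (i+j)) (4*s+i) (by omega)]
    exact psi_eq G hreg hdeg s (i+j)
  have hEmeet : ∀ p : ℕ × ℕ, p ∈ badF →
      walkExpStat G (6*s) (fun w => meetInd (p.1+p.2) (Sh (3*s-p.1) w))
        ≤ n⁻¹ * (5/4) := by
    rintro ⟨i, j⟩ hp
    rw [hbadF, Finset.mem_filter, Finset.mem_product, Finset.mem_range, Finset.mem_range] at hp
    obtain ⟨⟨hi, hj⟩, hsij⟩ := hp
    rw [walkExpStat_eq G hreg hd, ← hn]
    have heq : freeSum G (6*s) (fun w => meetInd (i+j) (Sh (3*s-i) w))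
        = ∑ ρ : V, lazyProb G (i+j) ρ ρ := by
      rw [show 6*s = (3*s-i) + (3*s+i) from by omega]
      rw [freeSum_sh_iter G hcol (3*s-i) (3*s+i) (meetInd (i+j))]
      rw [freeSum_det G hK1 (meetInd_det (i+j)) (3*s+i) (by omega)]
      exact freeSum_meet G (i+j)
    rw [heq]
    have hbound : ∑ ρ : V, lazyProb G (i+j) ρ ρ ≤ (5:ℝ)/4 := by
      have hmix := mix_bound G hconn hcard hreg (i+j) (by omega)
      calc (∑ ρ : V, lazyProb G (i+j) ρ ρ) ≤ ∑ ρ : V, 5 / (4 * n) := by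
            apply Finset.sum_le_sum
            intro ρ _
            exact hmix ρ ρ
        _ = (5:ℝ)/4 := by
            rw [Finset.sum_const, card_univ, nsmul_eq_mul, ← hn]
            field_simp
    exact mul_le_mul_of_nonneg_left hbound (by positivity)
  -- card of badF
  have hcardbad : (badF.card : ℝ) ≤ 8 * (s:ℝ)^2 := by
    have hsub : badF ⊆ ((Finset.range (2*s+1)) ×ˢ (Finset.range (2*s+1))).erase (0, 0) := by
      intro p hp
      rw [hbadF, Finset.mem_filter] at hp
      apply Finset.mem_erase.2
      refine ⟨?_, hp.1⟩
      intro h0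
      rw [h0] at hp
      have h2 : s + 1 ≤ 0 := by simpa using hp.2
      omega
    have hle := Finset.card_le_card hsub
    have hmem00 : ((0,0) : ℕ × ℕ) ∈ (Finset.range (2*s+1)) ×ˢ (Finset.range (2*s+1)) := by
      simp [Finset.mem_product]
    rw [Finset.card_erase_of_mem hmem00, Finset.card_product, Finset.card_range] at hle
    have hnat : badF.card ≤ 8 * (s*s) := by
      have hexp : (2*s+1) * (2*s+1) = 4*(s*s)+4*s+1 := by ring
      have hss : s ≤ s*s := Nat.le_mul_of_pos_left s (by omega)
      omega
    calc (badF.card : ℝ) ≤ ((8 * (s*s) : ℕ) : ℝ) := by exact_mod_cast hnat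
      _ = 8 * (s:ℝ)^2 := by push_cast; ring
  -- assemble
  have hmono : walkExpStat G (6*s) (fun _ => (1:ℝ))
      ≤ walkExpStat G (6*s)
        (fun w => (∑ p ∈ box, indB s (p.1+p.2) (Sh (2*s-p.1) w))
          + ∑ p ∈ badF, meetInd (p.1+p.2) (Sh (3*s-p.1) w)) := by
    rw [walkExpStat_eq G hreg hd, walkExpStat_eq G hreg hd]
    apply mul_le_mul_of_nonneg_left _ (by rw [← hn]; positivity)
    apply freeSum_mono
    intro w
    calc (1:ℝ) ≤ (∑ p ∈ box, indB s (p.1+p.2) (Sh (2*s-p.1) w)) + badInd s w := hpoint w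
      _ ≤ _ := by linarith [hbadpoint w]
  have hsplit : walkExpStat G (6*s)
      (fun w => (∑ p ∈ box, indB s (p.1+p.2) (Sh (2*s-p.1) w))
        + ∑ p ∈ badF, meetInd (p.1+p.2) (Sh (3*s-p.1) w))
      = (∑ p ∈ box, walkExpStat G (6*s) (fun w => indB s (p.1+p.2) (Sh (2*s-p.1) w)))
        + ∑ p ∈ badF, walkExpStat G (6*s) (fun w => meetInd (p.1+p.2) (Sh (3*s-p.1) w)) := by
    rw [walkExpStat_eq G hreg hd]
    rw [freeSum_add, freeSum_sum, freeSum_sum]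
    rw [mul_add, Finset.mul_sum, Finset.mul_sum]
    congr 1
    · exact Finset.sum_congr rfl fun p _ => (walkExpStat_eq G hreg hd _ _).symm
    · exact Finset.sum_congr rfl fun p _ => (walkExpStat_eq G hreg hd _ _).symm
  have hAsum : (∑ p ∈ box, walkExpStat G (6*s) (fun w => indB s (p.1+p.2) (Sh (2*s-p.1) w)))
      = n⁻¹ * ∑ x : V, HW G x s * Fx G s x := by
    rw [Finset.sum_congr rfl hEA]
    rw [← Finset.mul_sum]
    congr 1
    rw [Finset.sum_comm]
    apply Finset.sum_congr rfl
    intro x _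
    rw [hbox, Finset.sum_product]
    unfold HW
    rw [Finset.sum_mul]
    apply Finset.sum_congr rfl
    intro i _
    rw [Finset.sum_mul]
  have hBsum : (∑ p ∈ badF, walkExpStat G (6*s) (fun w => meetInd (p.1+p.2) (Sh (3*s-p.1) w)))
      ≤ 10 * (s:ℝ)^2 / n := by
    calc (∑ p ∈ badF, walkExpStat G (6*s) (fun w => meetInd (p.1+p.2) (Sh (3*s-p.1) w)))
        ≤ ∑ _p ∈ badF, n⁻¹ * (5/4) := Finset.sum_le_sum hEmeet
      _ = (badF.card : ℝ) * (n⁻¹ * (5/4)) := by rw [Finset.sum_const, nsmul_eq_mul]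
      _ ≤ 8 * (s:ℝ)^2 * (n⁻¹ * (5/4)) := by
          apply mul_le_mul_of_nonneg_right hcardbad (by positivity)
      _ = 10 * (s:ℝ)^2 / n := by field_simp; ring
  have hHb : ∀ x : V, HW G x s ≤ ⨆ ρ : V, HW G ρ s := fun x =>
    le_ciSup (f := fun ρ : V => HW G ρ s) (Set.Finite.bddAbove (Set.finite_range _)) x
  have hHbar0 : 0 ≤ ⨆ ρ : V, HW G ρ s := by
    have h1 : HW G (Classical.arbitrary V) s ≤ _ := hHb (Classical.arbitrary V)
    have h2 : 0 ≤ HW G (Classical.arbitrary V) s := by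
      unfold HW
      apply Finset.sum_nonneg
      intro i _
      exact Finset.sum_nonneg fun j _ => lazyProb_nonneg G _ _ _
    linarith
  have hfinal : n⁻¹ * ∑ x : V, HW G x s * Fx G s x
      ≤ (⨆ ρ : V, HW G ρ s) * (n⁻¹ * ∑ x : V, Fx G s x) := by
    have h1 : ∑ x : V, HW G x s * Fx G s x ≤ ∑ x : V, (⨆ ρ : V, HW G ρ s) * Fx G s x :=
      Finset.sum_le_sum fun x _ => mul_le_mul_of_nonneg_right (hHb x) (Fx_nonneg G s x)
    calc n⁻¹ * ∑ x : V, HW G x s * Fx G s x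
        ≤ n⁻¹ * ∑ x : V, (⨆ ρ : V, HW G ρ s) * Fx G s x := by
          apply mul_le_mul_of_nonneg_left h1 (by positivity)
      _ = (⨆ ρ : V, HW G ρ s) * (n⁻¹ * ∑ x : V, Fx G s x) := by
          rw [← Finset.mul_sum]; ring
  have hPsi0 : walkExpStat G (2*s) (indB s 0) = n⁻¹ * ∑ x : V, Fx G s x := by
    rw [walkExpStat_eq G hreg hd, ← hn]
    congr 1
    have h0 : freeSum G (2*s) (indB s 0) = ∑ x : V, lazyProb G 0 x x * Fx G s x :=
      psi_eq G hreg hdeg s 0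
    rw [h0]
    apply Finset.sum_congr rfl
    intro x _
    have : lazyProb G 0 x x = 1 := by unfold lazyProb; rw [if_pos rfl]
    rw [this, one_mul]
  have hchain : (1:ℝ) ≤ (⨆ ρ : V, HW G ρ s) * walkExpStat G (2*s) (indB s 0)
      + 10 * (s:ℝ)^2 / n := by
    calc (1:ℝ) = walkExpStat G (6*s) (fun _ => (1:ℝ)) := hE1.symm
      _ ≤ _ := hmono
      _ = _ := hsplit
      _ ≤ n⁻¹ * (∑ x : V, HW G x s * Fx G s x) + 10 * (s:ℝ)^2 / n := by
          rw [hAsum]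
          linarith [hBsum]
      _ ≤ (⨆ ρ : V, HW G ρ s) * (n⁻¹ * ∑ x : V, Fx G s x) + 10 * (s:ℝ)^2 / n := by
          linarith [hfinal]
      _ = (⨆ ρ : V, HW G ρ s) * walkExpStat G (2*s) (indB s 0) + 10 * (s:ℝ)^2 / n := by
          rw [hPsi0]
  linarith
end Master



section NE
variable (G : SimpleGraph V) [DecidableRel G.Adj]

lemma NEseg_subset (w : ℕ → V) (a : ℕ) : ∀ k, NEseg w a k ⊆ Finset.Icc a (a + k) := by
  intro k
  induction k with
  | zero =>
    intro m hm
    unfold NEseg at hm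
    rw [Finset.mem_singleton] at hm
    rw [Finset.mem_Icc]
    omega
  | succ k ih =>
    intro m hm
    unfold NEseg at hm
    rw [Finset.mem_union] at hm
    rcases hm with hm | hm
    · have := ih (Finset.mem_of_mem_filter m hm)
      rw [Finset.mem_Icc] at this ⊢
      omega
    · rw [Finset.mem_singleton] at hm
      rw [Finset.mem_Icc]
      omega

open Classical in
noncomputable def eventInd (s m : ℕ) : (ℕ → V) → ℝ := fun w =>
  if walkRange w (NEseg w (m - s) s) ∩ walkRange w (Finset.Icc (m + 1) (m + s)) = ∅
  then 1 else 0

lemma eventInd_nonneg (s m : ℕ) (w : ℕ → V) : 0 ≤ eventInd (V := V) s m w := by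
  unfold eventInd; split_ifs <;> norm_num

lemma eventInd_le_one (s m : ℕ) (w : ℕ → V) : eventInd (V := V) s m w ≤ 1 := by
  unfold eventInd; split_ifs <;> norm_num

lemma indB_le_eventInd (s m : ℕ) (hm : s ≤ m) (w : ℕ → V) :
    indB s 0 (Sh (m - s) w) ≤ eventInd (V := V) s m w := by
  have h0 : (0:ℝ) ≤ eventInd (V := V) s m w := eventInd_nonneg s m w
  unfold indB
  split_ifs with hB
  · -- Bp holds : the full ranges avoid, hence the NEseg range avoids
    obtain ⟨-, hB2⟩ := hB
    rw [walkRange_sh, walkRange_sh] at hB2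
    have hB2' : walkRange w (Finset.Icc (m-s) m) ∩ walkRange w (Finset.Icc (m+1) (m+s)) = ∅ := by
      rw [show (0 + (m-s)) = m - s from by omega, show s + (m-s) = m from by omega] at hB2
      rw [show s+0+1+(m-s) = m+1 from by omega, show s+0+s+(m-s) = m+s from by omega] at hB2
      exact hB2
    unfold eventInd
    rw [if_pos]
    · have hsub : NEseg w (m-s) s ⊆ Finset.Icc (m-s) m := by
        have := NEseg_subset w (m-s) s
        rw [show m-s+s = m from by omega] at this
        exact this
      have hsub2 : walkRange w (NEseg w (m-s) s) ⊆ walkRange w (Finset.Icc (m-s) m) :=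
        Finset.image_subset_image hsub
      rw [← Finset.subset_empty]
      intro v hv
      rw [Finset.mem_inter] at hv
      rw [← hB2']
      rw [Finset.mem_inter]
      exact ⟨hsub2 hv.1, hv.2⟩
  · exact h0

lemma card_NEloc (s aA bA : ℕ) (w : ℕ → V) :
    ((NEloc w s aA bA).card : ℝ)
      = ∑ m ∈ Finset.Icc (aA + s) (bA - s), eventInd (V := V) s m w := by
  unfold NEloc
  rw [Finset.card_filter]
  push_cast
  apply Finset.sum_congr rfl
  intro m _
  unfold eventInd
  split_ifs <;> norm_num

end NE


/-- Bounds on the expected number of `(A,s)`-locally non-erased indices. -/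
theorem expected_number_of_locally_nonerased_indices
    (G : SimpleGraph V) [DecidableRel G.Adj] (hconn : G.Connected)
    (hcard : 2 ≤ Fintype.card V) (d : ℕ) (hreg : G.IsRegularOfDegree d)
    (s : ℕ) (hs : tmix G + 1 ≤ s)
    (aA bA N : ℕ) (hA : aA ≤ bA)
    (hAcard : 2 * s + 1 ≤ (Finset.Icc aA bA).card) (hNA : bA ≤ N) :
    (1 - 10 * (s : ℝ) ^ 2 / (Fintype.card V : ℝ)) *
        (((Finset.Icc aA bA).card : ℝ) - 2 * s) / (⨆ ρ : V, HW G ρ s) ≤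
      walkExpStat G N (fun w => ((NEloc w s aA bA).card : ℝ)) ∧
    walkExpStat G N (fun w => ((NEloc w s aA bA).card : ℝ)) ≤ ((Finset.Icc aA bA).card : ℝ) := by

  classical
  have hdeg := degree_pos G hconn hcard
  have hd : 0 < d := by rw [← hreg (Classical.arbitrary V)]; exact hdeg _
  have hK1 : ∀ x : V, ∑ y, lazyStep G x y = 1 := fun x => sum_lazyStep G x (hdeg x)
  have hKs : ∀ x y : V, lazyStep G x y = lazyStep G y x := lazyStep_symm G hreg
  have hcol : ∀ y : V, ∑ x, lazyStep G x y = 1 := by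
    intro y
    rw [Finset.sum_congr rfl fun x _ => hKs x y]
    exact hK1 y
  set n : ℝ := (Fintype.card V : ℝ) with hn
  have hn0 : 0 < n := by
    have := Fintype.card_pos (α := V); rw [hn]; positivity
  have hs1 : 1 ≤ s := by omega
  -- arithmetic about the interval
  have hcardIcc : (Finset.Icc aA bA).card = bA + 1 - aA := Nat.card_Icc aA bA
  have hab : aA + 2 * s ≤ bA := by
    rw [hcardIcc] at hAcard; omega
  have hcardIcc' : (Finset.Icc (aA + s) (bA - s)).card = (Finset.Icc aA bA).card - 2 * s := by
    rw [Nat.card_Icc, Nat.card_Icc]; omega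
  have hC : (((Finset.Icc aA bA).card : ℝ) - 2 * s)
      = ((Finset.Icc (aA + s) (bA - s)).card : ℝ) := by
    rw [hcardIcc', Nat.cast_sub (by omega)]
    push_cast
    ring
  -- rewrite the functional
  have hfun : (fun w : ℕ → V => ((NEloc w s aA bA).card : ℝ))
      = fun w => ∑ m ∈ Finset.Icc (aA + s) (bA - s), eventInd (V := V) s m w :=
    funext fun w => card_NEloc s aA bA w
  rw [hfun]
  -- linearity
  have hlin : walkExpStat G N
        (fun w => ∑ m ∈ Finset.Icc (aA + s) (bA - s), eventInd (V := V) s m w)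
      = ∑ m ∈ Finset.Icc (aA + s) (bA - s), walkExpStat G N (eventInd (V := V) s m) := by
    rw [walkExpStat_eq G hreg hd, freeSum_sum, Finset.mul_sum]
    exact Finset.sum_congr rfl fun m _ => (walkExpStat_eq G hreg hd _ _).symm
  rw [hlin]
  have hE1 : walkExpStat G N (fun _ => (1:ℝ)) = 1 := by
    rw [walkExpStat_eq G hreg hd, freeSum_const G hK1, ← hn]
    field_simp
  constructor
  · -- lower bound
    set Ψ : ℝ := walkExpStat G (2*s) (indB s 0) with hΨ
    have hcore := core_lower G hconn hcard hreg hs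
    have hHb : ∀ x : V, HW G x s ≤ ⨆ ρ : V, HW G ρ s := fun x =>
      le_ciSup (f := fun ρ : V => HW G ρ s) (Set.Finite.bddAbove (Set.finite_range _)) x
    have hHW1 : (1:ℝ) ≤ HW G (Classical.arbitrary V) s := by
      unfold HW
      have hterm : (1:ℝ) ≤ ∑ j ∈ Finset.range (s+1),
          lazyProb G (0 + j) (Classical.arbitrary V) (Classical.arbitrary V) := by
        have h00 : lazyProb G (0 + 0) (Classical.arbitrary V) (Classical.arbitrary V) = 1 := by
          show lazyProb G 0 _ _ = 1
          unfold lazyProb; rw [if_pos rfl]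
        have hle := Finset.single_le_sum
          (f := fun j => lazyProb G (0 + j) (Classical.arbitrary V) (Classical.arbitrary V))
          (fun j _ => lazyProb_nonneg G _ _ _) (Finset.mem_range.2 (by omega : 0 < s+1))
        calc (1:ℝ) = lazyProb G (0 + 0) (Classical.arbitrary V) (Classical.arbitrary V) :=
              h00.symm
          _ ≤ _ := hle
      have hle2 := Finset.single_le_sum
        (f := fun i => ∑ j ∈ Finset.range (s+1),
          lazyProb G (i + j) (Classical.arbitrary V) (Classical.arbitrary V))
        (fun i _ => Finset.sum_nonneg fun j _ => lazyProb_nonneg G _ _ _)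
        (Finset.mem_range.2 (by omega : 0 < s+1))
      calc (1:ℝ) ≤ ∑ j ∈ Finset.range (s+1),
            lazyProb G (0 + j) (Classical.arbitrary V) (Classical.arbitrary V) := hterm
        _ ≤ _ := hle2
    have hHbar1 : (1:ℝ) ≤ ⨆ ρ : V, HW G ρ s :=
      le_trans hHW1 (hHb (Classical.arbitrary V))
    have hHbar0 : (0:ℝ) < ⨆ ρ : V, HW G ρ s := by linarith
    have hΨlb : (1 - 10 * (s:ℝ)^2 / n) / (⨆ ρ : V, HW G ρ s) ≤ Ψ := by
      rw [div_le_iff₀ hHbar0]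
      calc 1 - 10 * (s:ℝ)^2 / n ≤ (⨆ ρ : V, HW G ρ s) * Ψ := hcore
        _ = Ψ * (⨆ ρ : V, HW G ρ s) := by ring
    -- each term is at least Ψ
    have hterm : ∀ m ∈ Finset.Icc (aA + s) (bA - s),
        Ψ ≤ walkExpStat G N (eventInd (V := V) s m) := by
      intro m hm
      rw [Finset.mem_Icc] at hm
      have hms : s ≤ m := by omega
      have hmN : m + s ≤ N := by omega
      have heq : walkExpStat G N (fun w => indB s 0 (Sh (m - s) w)) = Ψ := by
        rw [hΨ, walkExpStat_eq G hreg hd, walkExpStat_eq G hreg hd]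
        congr 1
        rw [show N = (m - s) + (N - m + s) from by omega]
        rw [freeSum_sh_iter G hcol (m - s) (N - m + s) (indB s 0)]
        have h2 : freeSum G (N - m + s) (indB s 0) = freeSum G (2*s) (indB s 0) :=
          freeSum_det G hK1 (indB_det s 0) (N - m + s) (by omega)
        rw [h2]
      rw [← heq, walkExpStat_eq G hreg hd, walkExpStat_eq G hreg hd]
      apply mul_le_mul_of_nonneg_left _ (by positivity)
      apply freeSum_mono
      intro w
      exact indB_le_eventInd s m hms w
    have hsum : ((Finset.Icc (aA + s) (bA - s)).card : ℝ) * Ψ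
        ≤ ∑ m ∈ Finset.Icc (aA + s) (bA - s), walkExpStat G N (eventInd (V := V) s m) := by
      calc ((Finset.Icc (aA + s) (bA - s)).card : ℝ) * Ψ
          = ∑ _m ∈ Finset.Icc (aA + s) (bA - s), Ψ := by
            rw [Finset.sum_const, nsmul_eq_mul]
        _ ≤ _ := Finset.sum_le_sum hterm
    have hC0 : (0:ℝ) ≤ ((Finset.Icc (aA + s) (bA - s)).card : ℝ) := by positivity
    calc (1 - 10 * (s:ℝ)^2 / n) * (((Finset.Icc aA bA).card : ℝ) - 2 * s)
          / (⨆ ρ : V, HW G ρ s)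
        = ((Finset.Icc (aA + s) (bA - s)).card : ℝ)
            * ((1 - 10 * (s:ℝ)^2 / n) / (⨆ ρ : V, HW G ρ s)) := by
          rw [hC]; ring
      _ ≤ ((Finset.Icc (aA + s) (bA - s)).card : ℝ) * Ψ :=
          mul_le_mul_of_nonneg_left hΨlb hC0
      _ ≤ _ := hsum
  · -- upper bound
    have hone : ∀ m ∈ Finset.Icc (aA + s) (bA - s),
        walkExpStat G N (eventInd (V := V) s m) ≤ 1 := by
      intro m _
      calc walkExpStat G N (eventInd (V := V) s m)
          ≤ walkExpStat G N (fun _ => (1:ℝ)) := by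
            rw [walkExpStat_eq G hreg hd, walkExpStat_eq G hreg hd]
            apply mul_le_mul_of_nonneg_left _ (by positivity)
            exact freeSum_mono G N (eventInd_le_one s m)
        _ = 1 := hE1
    calc (∑ m ∈ Finset.Icc (aA + s) (bA - s), walkExpStat G N (eventInd (V := V) s m))
        ≤ ∑ _m ∈ Finset.Icc (aA + s) (bA - s), (1:ℝ) := Finset.sum_le_sum hone
      _ = ((Finset.Icc (aA + s) (bA - s)).card : ℝ) := by
          rw [Finset.sum_const, nsmul_eq_mul, mul_one]
      _ ≤ ((Finset.Icc aA bA).card : ℝ) := by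
          have : (Finset.Icc (aA + s) (bA - s)).card ≤ (Finset.Icc aA bA).card := by
            rw [Nat.card_Icc, Nat.card_Icc]; omega
          exact_mod_cast this
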